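/- arXiv:2101.00207 — 2 statements merged into one kernel-verified Lean document; each statement's English description precedes it below -/
import Mathlib

section
/- Let E and F be Dedekind complete Riesz spaces with weak order units e and f. Every component u of e ⊗ f in the Dedekind completion of the Fremlin tensor product E ⊗̄ F satisfies u = sup { p ⊗ q : p a component of e, q a component of f, p ⊗ q ≤ u }. -/
open Finset

section Defs

variable {E : Type*} [ConditionallyCompleteLattice E] [AddCommGroup E] [Module ℝ E]
  [CovariantClass E E (· + ·) (· ≤ ·)]

/-- Order convergence of a sequence: there is a sequence `u ↓ 0` dominating the tails. -/
def OrderConvergesTo (f : ℕ → E) (x : E) : Prop :=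
  ∃ u : ℕ → E, Antitone u ∧ IsGLB (Set.range u) (0 : E) ∧
    ∀ m : ℕ, ∃ N : ℕ, ∀ n ≥ N, |f n - x| ≤ u m

/-- `p` is a component of `e`. -/
def IsComponent (e p : E) : Prop := 0 ≤ p ∧ p ≤ e ∧ p ⊓ (e - p) = 0

/-- A sequence of components is of density zero if its Cesàro means order converge to `0`. -/
def DensityZero (p : ℕ → E) : Prop :=
  OrderConvergesTo (fun n => (n : ℝ)⁻¹ • ∑ k ∈ Finset.range n, p k) (0 : E)

/-- The band projection (onto the band generated by `p`) applied to a positive element `f`. -/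
noncomputable def bandProj (p f : E) : E :=
  sSup (Set.range fun n : ℕ => f ⊓ (n : ℝ) • p)

end Defs

section Systems

variable (E : Type*) [ConditionallyCompleteLattice E] [AddCommGroup E] [Module ℝ E]
  [CovariantClass E E (· + ·) (· ≤ ·)]

/-- The data of a conditional expectation preserving system, without the
intertwining identity `T S = T`: a Dedekind complete Riesz space with weak order unit `e`,
the `f`-algebra multiplication of `E_e` (with unit `e`), a strictly-positive-free
conditional expectation operator `T` with `T e = e`, and a Riesz homomorphism `S`
with `S e = e`. -/
structure PreCEPS where
  e : E
  e_pos : 0 < e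
  weakUnit : ∀ x : E, e ⊓ |x| = 0 → x = 0
  /-- the `f`-algebra multiplication (of the ideal generated by `e`) -/
  mul : E →ₗ[ℝ] E →ₗ[ℝ] E
  mul_comm' : ∀ x y, mul x y = mul y x
  mul_pos' : ∀ x y, 0 ≤ x → 0 ≤ y → 0 ≤ mul x y
  one_mul' : ∀ x, mul e x = x
  finf' : ∀ x y z, x ⊓ y = 0 → 0 ≤ z → (mul x z) ⊓ y = 0
  /-- the conditional expectation operator -/
  T : E →ₗ[ℝ] E
  T_pos : ∀ x, 0 ≤ x → 0 ≤ T x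
  T_proj : ∀ x, T (T x) = T x
  T_e : T e = e
  T_oc : ∀ (s : Set E) (x : E), s.Nonempty → DirectedOn (· ≤ ·) s → IsLUB s x →
    IsLUB (T '' s) (T x)
  T_range_closed : ∀ (s : Set E) (x : E), (∀ y ∈ s, T y = y) → IsLUB s x → T x = x
  /-- the Riesz homomorphism -/
  S : E →ₗ[ℝ] E
  S_sup : ∀ x y, S (x ⊔ y) = S x ⊔ S y
  S_e : S e = e

/-- A conditional expectation preserving system. -/
structure CEPS extends PreCEPS E where
  TS : ∀ x, T (S x) = T x

variable {E}

/-- Strict positivity of the conditional expectation operator of a system. -/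
def CEPS.StrictPos (A : CEPS E) : Prop := ∀ x : E, 0 ≤ x → A.T x = 0 → x = 0

/-- Ergodicity, characterised by Cesàro convergence of
`T((S^k p)·q)` to `Tp·Tq` for all components `p, q` of `e`. -/
def CEPS.Ergodic (A : CEPS E) : Prop :=
  ∀ p q : E, IsComponent A.e p → IsComponent A.e q →
    OrderConvergesTo
      (fun n => (n : ℝ)⁻¹ • ∑ k ∈ Finset.range n, A.T (A.mul ((A.S ^ k) p) q))
      (A.mul (A.T p) (A.T q))

/-- Conditional weak mixing. -/
def CEPS.WeakMixing (A : CEPS E) : Prop :=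
  ∀ p q : E, IsComponent A.e p → IsComponent A.e q →
    OrderConvergesTo
      (fun n => (n : ℝ)⁻¹ • ∑ k ∈ Finset.range n,
        |A.T (A.mul ((A.S ^ k) p) q) - A.mul (A.T p) (A.T q)|) (0 : E)

end Systems

section Tensor

variable {E F G : Type*}
  [ConditionallyCompleteLattice E] [AddCommGroup E] [Module ℝ E]
  [CovariantClass E E (· + ·) (· ≤ ·)]
  [ConditionallyCompleteLattice F] [AddCommGroup F] [Module ℝ F]
  [CovariantClass F F (· + ·) (· ≤ ·)]
  [ConditionallyCompleteLattice G] [AddCommGroup G] [Module ℝ G]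
  [CovariantClass G G (· + ·) (· ≤ ·)]

/-- A realisation of the Dedekind completion of the Fremlin tensor product of the
underlying spaces of two conditional expectation preserving systems, carrying the
pre-system structure (Grobler's tensor product conditional expectation and the tensor
product Riesz homomorphism), but without the intertwining identity for the product. -/
structure TensorPreCEPS (A : CEPS E) (B : CEPS F) (G : Type*)
    [ConditionallyCompleteLattice G] [AddCommGroup G] [Module ℝ G]
    [CovariantClass G G (· + ·) (· ≤ ·)] where
  sys : PreCEPS G
  tmul : E →ₗ[ℝ] F →ₗ[ℝ] G
  tmul_pos : ∀ x y, 0 ≤ x → 0 ≤ y → 0 ≤ tmul x y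
  e_def : sys.e = tmul A.e B.e
  T_tmul : ∀ x y, sys.T (tmul x y) = tmul (A.T x) (B.T y)
  S_tmul : ∀ x y, sys.S (tmul x y) = tmul (A.S x) (B.S y)
  mul_tmul : ∀ x y x' y',
    sys.mul (tmul x y) (tmul x' y') = tmul (A.mul x x') (B.mul y y')
  comp_dense : ∀ u : G, IsComponent sys.e u →
    IsLUB {w : G | ∃ p q, IsComponent A.e p ∧ IsComponent B.e q ∧
      tmul p q ≤ u ∧ w = tmul p q} u
  tmul_oc_left : ∀ (x : ℕ → E) (a : E) (y : F), 0 ≤ y →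
    OrderConvergesTo x a → OrderConvergesTo (fun n => tmul (x n) y) (tmul a y)
  tmul_oc_right : ∀ (x : E) (y : ℕ → F) (b : F), 0 ≤ x →
    OrderConvergesTo y b → OrderConvergesTo (fun n => tmul x (y n)) (tmul x b)

/-- As `TensorPreCEPS`, but where the tensor product system is a full conditional
expectation preserving system. -/
structure TensorCEPS (A : CEPS E) (B : CEPS F) (G : Type*)
    [ConditionallyCompleteLattice G] [AddCommGroup G] [Module ℝ G]
    [CovariantClass G G (· + ·) (· ≤ ·)] where
  sys : CEPS G
  tmul : E →ₗ[ℝ] F →ₗ[ℝ] G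
  tmul_pos : ∀ x y, 0 ≤ x → 0 ≤ y → 0 ≤ tmul x y
  e_def : sys.e = tmul A.e B.e
  T_tmul : ∀ x y, sys.T (tmul x y) = tmul (A.T x) (B.T y)
  S_tmul : ∀ x y, sys.S (tmul x y) = tmul (A.S x) (B.S y)
  mul_tmul : ∀ x y x' y',
    sys.mul (tmul x y) (tmul x' y') = tmul (A.mul x x') (B.mul y y')
  comp_dense : ∀ u : G, IsComponent sys.e u →
    IsLUB {w : G | ∃ p q, IsComponent A.e p ∧ IsComponent B.e q ∧
      tmul p q ≤ u ∧ w = tmul p q} u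
  tmul_oc_left : ∀ (x : ℕ → E) (a : E) (y : F), 0 ≤ y →
    OrderConvergesTo x a → OrderConvergesTo (fun n => tmul (x n) y) (tmul a y)
  tmul_oc_right : ∀ (x : E) (y : ℕ → F) (b : F), 0 ≤ x →
    OrderConvergesTo y b → OrderConvergesTo (fun n => tmul x (y n)) (tmul x b)

end Tensor


section AuxLattice

variable {L : Type*} [Lattice L] [AddCommGroup L] [CovariantClass L L (· + ·) (· ≤ ·)]

lemma aux_posPart_inf (a : L) : (a ⊔ 0) ⊓ (-a ⊔ 0) = 0 := by
  have h := posPart_inf_negPart_eq_zero a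
  rwa [posPart_def, negPart_def] at h

lemma aux_sub_inf (x c : L) : x - x ⊓ c = (x - c) ⊔ 0 := by
  rw [sub_eq_add_neg, neg_inf, add_sup, ← sub_eq_add_neg, ← sub_eq_add_neg, sub_self, sup_comm]

lemma aux_inf_add_le {a b c : L} (ha : 0 ≤ a) (hb : 0 ≤ b) (hc : 0 ≤ c) :
    a ⊓ (b + c) ≤ a ⊓ b + a ⊓ c := by
  have h1 : a ⊓ b + a ⊓ c = ((a + a) ⊓ (b + a)) ⊓ ((a + c) ⊓ (b + c)) := by
    rw [add_inf a c (a ⊓ b), inf_add a b a, inf_add a b c]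
  rw [h1]
  refine le_inf (le_inf ?_ ?_) (le_inf ?_ ?_)
  · exact inf_le_left.trans (le_add_of_nonneg_right ha)
  · exact inf_le_left.trans (le_add_of_nonneg_left hb)
  · exact inf_le_left.trans (le_add_of_nonneg_right hc)
  · exact inf_le_right

lemma aux_disj_add {a b c : L} (ha : 0 ≤ a) (hb : 0 ≤ b) (hc : 0 ≤ c)
    (h1 : a ⊓ b = 0) (h2 : a ⊓ c = 0) : a ⊓ (b + c) = 0 :=
  le_antisymm (by simpa [h1, h2] using aux_inf_add_le ha hb hc)
    (le_inf ha (add_nonneg hb hc))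

lemma aux_le_of_disj {a b c : L} (ha : 0 ≤ a) (hb : 0 ≤ b) (hc : 0 ≤ c)
    (habc : a ≤ b + c) (hd : a ⊓ c = 0) : a ≤ b := by
  calc a = a ⊓ (b + c) := (inf_eq_left.2 habc).symm
  _ ≤ a ⊓ b + a ⊓ c := aux_inf_add_le ha hb hc
  _ = a ⊓ b := by rw [hd, add_zero]
  _ ≤ b := inf_le_right

lemma aux_inf_nsmul {a b : L} (ha : 0 ≤ a) (hb : 0 ≤ b) :
    ∀ n : ℕ, 1 ≤ n → a ⊓ n • b ≤ n • (a ⊓ b) := by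
  intro n hn
  induction n, hn using Nat.le_induction with
  | base => simp
  | succ n hn ih =>
    calc a ⊓ (n + 1) • b = a ⊓ (n • b + b) := by rw [succ_nsmul]
    _ ≤ a ⊓ n • b + a ⊓ b := aux_inf_add_le ha (nsmul_nonneg hb n) hb
    _ ≤ n • (a ⊓ b) + a ⊓ b := add_le_add_left ih _
    _ = (n + 1) • (a ⊓ b) := (succ_nsmul _ n).symm

lemma aux_disj_nsmul {a b : L} (ha : 0 ≤ a) (hb : 0 ≤ b) (h : a ⊓ b = 0) (j k : ℕ) :
    (j • a) ⊓ (k • b) = 0 := by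
  refine le_antisymm ?_ (le_inf (nsmul_nonneg ha j) (nsmul_nonneg hb k))
  rcases Nat.eq_zero_or_pos j with rfl | hj
  · simpa using inf_le_left (a := (0:L)) (b := k • b)
  rcases Nat.eq_zero_or_pos k with rfl | hk
  · simpa using inf_le_right (a := j • a) (b := (0:L))
  calc (j • a) ⊓ (k • b) ≤ k • ((j • a) ⊓ b) := aux_inf_nsmul (nsmul_nonneg ha j) hb k hk
  _ ≤ k • (j • (b ⊓ a)) := by
      refine nsmul_le_nsmul_right ?_ k
      rw [inf_comm]
      exact aux_inf_nsmul hb ha j hj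
  _ = 0 := by rw [inf_comm, h, smul_zero, smul_zero]

lemma aux_nsmul_le_cancel {a b : L} {n : ℕ} (hn : 1 ≤ n) (h : n • a ≤ n • b) : a ≤ b := by
  have h0 : 0 ≤ n • (b - a) := by rw [nsmul_sub]; exact sub_nonneg.2 h
  set c := b - a with hc
  set t : L := (-c) ⊔ 0 with ht
  have ht0 : 0 ≤ t := le_sup_right
  have hct : -c ≤ t := le_sup_left
  have key : ∀ m : ℕ, (m + 1) • t ≤ ((m + 1) • (-c)) ⊔ (m • t) := by
    intro m
    induction m with
    | zero => simp [ht]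
    | succ m ih =>
      calc (m + 2) • t = (m + 1) • t + t := succ_nsmul t (m + 1)
      _ ≤ (((m + 1) • (-c)) ⊔ (m • t)) + ((-c) ⊔ 0) := add_le_add_left ih t
      _ = ((((m + 1) • (-c)) + (-c)) ⊔ (((m + 1) • (-c)) + 0)) ⊔
            (((m • t) + (-c)) ⊔ ((m • t) + 0)) := by
          rw [sup_add (((m + 1)) • (-c)) (m • t) ((-c) ⊔ 0), add_sup, add_sup]
      _ ≤ ((m + 2) • (-c)) ⊔ ((m + 1) • t) := by
          refine sup_le (sup_le ?_ ?_) (sup_le ?_ ?_)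
          · rw [← succ_nsmul (-c) (m+1)]; exact le_sup_left
          · rw [add_zero]
            exact le_sup_of_le_right ((nsmul_le_nsmul_right hct (m+1)))
          · refine le_sup_of_le_right ?_
            rw [succ_nsmul t m]
            exact add_le_add_right hct _
          · rw [add_zero]
            refine le_sup_of_le_right ?_
            rw [succ_nsmul t m]
            exact le_add_of_nonneg_right ht0
  obtain ⟨m, rfl⟩ : ∃ m, n = m + 1 := ⟨n - 1, (Nat.succ_pred_eq_of_pos hn).symm⟩
  have hneg : (m + 1) • (-c) ≤ 0 := by
    have he : (m + 1) • (0 - c) = (m + 1) • (0:L) - (m+1) • c := nsmul_sub 0 c (m+1)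
    simp only [zero_sub, smul_zero] at he
    rw [he]
    exact neg_nonpos.2 h0
  have h1 : (m + 1) • t ≤ m • t := by
    refine (key m).trans (sup_le (hneg.trans (nsmul_nonneg ht0 m)) le_rfl)
  have h2 : t ≤ 0 := by
    rw [succ_nsmul t m] at h1
    have h1' : m • t + t ≤ m • t + 0 := by rwa [add_zero]
    exact le_of_add_le_add_left h1'
  have h3 : -c ≤ 0 := hct.trans h2
  exact sub_nonneg.1 (neg_nonpos.1 h3)

lemma aux_trunc_le {e x : L} (he : 0 ≤ e) (hx : 0 ≤ x) (n m : ℕ) :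
    e ⊓ n • ((m • x - e) ⊔ 0) ≤ m • x := by
  set B : L := (m • x - e) ⊔ 0 with hB
  set A : L := (e - m • x) ⊔ 0 with hA
  have hB0 : 0 ≤ B := le_sup_right
  have hA0 : 0 ≤ A := le_sup_right
  have hmx : 0 ≤ m • x := nsmul_nonneg hx m
  have hAB : A ⊓ B = 0 := by
    have h := aux_posPart_inf (e - m • x)
    rwa [neg_sub] at h
  have hw0 : 0 ≤ e ⊓ n • B := le_inf he (nsmul_nonneg hB0 n)
  have hd : (e ⊓ n • B) ⊓ A = 0 := by
    refine le_antisymm ?_ (le_inf hw0 hA0)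
    calc (e ⊓ n • B) ⊓ A ≤ (n • B) ⊓ (1 • A) := by
          rw [one_nsmul]; exact inf_le_inf_right A inf_le_right
    _ = 0 := aux_disj_nsmul hB0 hA0 (by rwa [inf_comm]) n 1
  have hle : e ⊓ n • B ≤ m • x + A := by
    refine inf_le_left.trans ?_
    have : e - m • x ≤ A := le_sup_left
    rw [add_comm]
    exact sub_le_iff_le_add.1 this
  exact aux_le_of_disj hw0 hmx hA0 hle hd

end AuxLattice

section AuxComplete
variable {L : Type*} [ConditionallyCompleteLattice L] [AddCommGroup L]
  [CovariantClass L L (· + ·) (· ≤ ·)]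

lemma aux_arch {a c : L} (h : ∀ n : ℕ, n • a ≤ c) : a ≤ 0 := by
  set S := Set.range fun n : ℕ => n • a with hS
  have hne : S.Nonempty := Set.range_nonempty _
  have hbdd : BddAbove S := ⟨c, by rintro _ ⟨n, rfl⟩; exact h n⟩
  have hub : ∀ n : ℕ, n • a ≤ sSup S - a := by
    intro n
    have h1 : (n + 1) • a ≤ sSup S := le_csSup hbdd ⟨n + 1, rfl⟩
    rw [succ_nsmul] at h1
    exact le_sub_iff_add_le.2 h1
  have h2 : sSup S ≤ sSup S - a := csSup_le hne (by rintro _ ⟨n, rfl⟩; exact hub n)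
  have h3 : sSup S + a ≤ sSup S := le_sub_iff_add_le.1 h2
  have h4 : sSup S + a ≤ sSup S + 0 := by rwa [add_zero]
  exact le_of_add_le_add_left h4

lemma aux_band {e z : L} (he : 0 ≤ e) (hz : 0 ≤ z) :
    ∃ p : L, (0 ≤ p ∧ p ≤ e ∧ p ⊓ (e - p) = 0) ∧ (e - p) ⊓ z = 0 ∧
      (∀ n : ℕ, e ⊓ n • z ≤ p) ∧ ∀ M, (∀ n : ℕ, e ⊓ n • z ≤ M) → p ≤ M := by
  set a : ℕ → L := fun n => e ⊓ n • z with ha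
  have hbdd : BddAbove (Set.range a) := ⟨e, by rintro _ ⟨n, rfl⟩; exact inf_le_left⟩
  have hne : (Set.range a).Nonempty := Set.range_nonempty _
  set p := sSup (Set.range a) with hp
  have hub : ∀ n : ℕ, a n ≤ p := fun n => le_csSup hbdd ⟨n, rfl⟩
  have ha0 : ∀ n, 0 ≤ a n := fun n => le_inf he (nsmul_nonneg hz n)
  have hp0 : 0 ≤ p := (ha0 0).trans (hub 0)
  have hpe : p ≤ e := csSup_le hne (by rintro _ ⟨n, rfl⟩; exact inf_le_left)
  set r := e - p with hr
  have hr0 : 0 ≤ r := sub_nonneg.2 hpe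
  have hra : ∀ n : ℕ, r ≤ (e - n • z) ⊔ 0 := by
    intro n
    calc r ≤ e - a n := sub_le_sub_left (hub n) e
    _ = (e - n • z) ⊔ 0 := aux_sub_inf e (n • z)
  have hrz : r ⊓ z = 0 := by
    have h0 : 0 ≤ r ⊓ z := le_inf hr0 hz
    refine le_antisymm (aux_arch (c := e) fun n => ?_) h0
    rcases Nat.eq_zero_or_pos n with rfl | hn
    · simpa using he
    set B : L := (n • z - e) ⊔ 0 with hB
    have hB0 : 0 ≤ B := le_sup_right
    have hdisj : (r ⊓ z) ⊓ B = 0 := by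
      refine le_antisymm ?_ (le_inf h0 hB0)
      calc (r ⊓ z) ⊓ B ≤ ((e - n • z) ⊔ 0) ⊓ B :=
            inf_le_inf_right B (inf_le_left.trans (hra n))
      _ = 0 := by
          have h := aux_posPart_inf (e - n • z)
          rwa [neg_sub] at h
    have hd2 : (n • (r ⊓ z)) ⊓ B = 0 := by
      have h := aux_disj_nsmul h0 hB0 hdisj n 1
      rwa [one_nsmul] at h
    have hle : n • (r ⊓ z) ≤ e + B := by
      calc n • (r ⊓ z) ≤ n • z := nsmul_le_nsmul_right inf_le_right n
      _ ≤ e + B := by rw [add_comm]; exact sub_le_iff_le_add.1 le_sup_left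
    exact aux_le_of_disj (nsmul_nonneg h0 n) he hB0 hle hd2
  have hpr : p ⊓ r = 0 := by
    set d := p ⊓ r with hd
    have hd0 : 0 ≤ d := le_inf hp0 hr0
    have hdan : ∀ n, d ⊓ a n = 0 := by
      intro n
      refine le_antisymm ?_ (le_inf hd0 (ha0 n))
      calc d ⊓ a n ≤ (1 • r) ⊓ (n • z) := by
            rw [one_nsmul]; exact inf_le_inf inf_le_right inf_le_right
      _ = 0 := aux_disj_nsmul hr0 hz hrz 1 n
    have hkey : ∀ n, a n ≤ p - d := by
      intro n
      have h1 : d ⊓ p + a n ≤ d ⊓ a n + p := by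
        calc d ⊓ p + a n = (d + a n) ⊓ (p + a n) := inf_add d p (a n)
        _ ≤ (d + a n) ⊓ (a n + p) := by rw [add_comm p (a n)]
        _ ≤ (d + p) ⊓ (a n + p) := inf_le_inf_right _ (add_le_add_right (hub n) d)
        _ = (d ⊓ a n) + p := (inf_add d (a n) p).symm
      rw [inf_eq_left.2 inf_le_left, hdan n, zero_add] at h1
      rw [le_sub_iff_add_le, add_comm]
      exact h1
    have h2 : p ≤ p - d := csSup_le hne (by rintro _ ⟨n, rfl⟩; exact hkey n)
    have h3 : p + d ≤ p + 0 := by rw [add_zero]; exact le_sub_iff_add_le.1 h2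
    exact le_antisymm (le_of_add_le_add_left h3) hd0
  exact ⟨p, ⟨hp0, hpe, hpr⟩, hrz, hub, fun M hM => csSup_le hne (by rintro _ ⟨n, rfl⟩; exact hM n)⟩

end AuxComplete

/-- every component `u` of `e ⊗ f` in the Dedekind completion `G` of the
Fremlin tensor product is the supremum of the components `p ⊗ q ≤ u` with `p` a
component of `e` and `q` a component of `f`. -/
theorem component_eq_sup_of_tmul_components
    {E F G : Type*}
    [ConditionallyCompleteLattice E] [AddCommGroup E] [Module ℝ E]
    [CovariantClass E E (· + ·) (· ≤ ·)]
    [ConditionallyCompleteLattice F] [AddCommGroup F] [Module ℝ F]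
    [CovariantClass F F (· + ·) (· ≤ ·)]
    [ConditionallyCompleteLattice G] [AddCommGroup G] [Module ℝ G]
    [CovariantClass G G (· + ·) (· ≤ ·)]
    (e : E) (he : 0 < e) (hwuE : ∀ x : E, e ⊓ |x| = 0 → x = 0)
    (f : F) (hf : 0 < f) (hwuF : ∀ y : F, f ⊓ |y| = 0 → y = 0)
    (tmul : E →ₗ[ℝ] F →ₗ[ℝ] G)
    (hpos : ∀ x y, 0 ≤ x → 0 ≤ y → 0 ≤ tmul x y)
    (hinfl : ∀ (x x' : E) (y : F), 0 ≤ y → tmul (x ⊓ x') y = tmul x y ⊓ tmul x' y)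
    (hinfr : ∀ (x : E) (y y' : F), 0 ≤ x → tmul x (y ⊓ y') = tmul x y ⊓ tmul x y')
    -- order density of `E ⊗ F` in the Dedekind completion `G`
    (hdense : ∀ g : G, 0 < g →
      ∃ x y, 0 ≤ x ∧ 0 ≤ y ∧ 0 < tmul x y ∧ tmul x y ≤ g)
    -- `e ⊗ f` is a weak order unit of `G`
    (hwuG : ∀ g : G, tmul e f ⊓ |g| = 0 → g = 0)
    (u : G) (hu : IsComponent (tmul e f) u) :
    IsLUB {w : G | ∃ p q, IsComponent e p ∧ IsComponent f q ∧
      tmul p q ≤ u ∧ w = tmul p q} u := by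
  obtain ⟨hu0, huW, hud⟩ := hu
  -- basic tmul tools
  have tsub1 : ∀ (a b : E) (y' : F), tmul (a - b) y' = tmul a y' - tmul b y' := by
    intro a b y'
    rw [map_sub, LinearMap.sub_apply]
  have tsub2 : ∀ (a : E) (b c : F), tmul a (b - c) = tmul a b - tmul a c := fun a b c =>
    map_sub (tmul a) b c
  have tns1 : ∀ (n : ℕ) (a : E) (y' : F), tmul (n • a) y' = n • tmul a y' := by
    intro n a y'
    rw [map_nsmul, LinearMap.smul_apply]
  have tns2 : ∀ (n : ℕ) (a : E) (y' : F), tmul a (n • y') = n • tmul a y' := fun n a y' =>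
    map_nsmul (tmul a) n y'
  have tmono1 : ∀ {a b : E} (y' : F), a ≤ b → 0 ≤ y' → tmul a y' ≤ tmul b y' := by
    intro a b y' hab hy'
    have h := hpos (b - a) y' (sub_nonneg.2 hab) hy'
    rw [tsub1] at h
    exact sub_nonneg.1 h
  have tmono2 : ∀ (a : E) {b c : F}, b ≤ c → 0 ≤ a → tmul a b ≤ tmul a c := by
    intro a b c hbc ha
    have h := hpos a (c - b) ha (sub_nonneg.2 hbc)
    rw [tsub2] at h
    exact sub_nonneg.1 h
  constructor
  · rintro w ⟨p, q, hp, hq, hle, rfl⟩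
    exact hle
  · intro b hb
    have hWpos : 0 ≤ tmul e f := hpos e f he.le hf.le
    have hcomp0E : IsComponent e (0 : E) := by
      refine ⟨le_refl 0, he.le, ?_⟩
      rw [sub_zero]
      exact inf_eq_left.2 he.le
    have hcomp0F : IsComponent f (0 : F) := by
      refine ⟨le_refl 0, hf.le, ?_⟩
      rw [sub_zero]
      exact inf_eq_left.2 hf.le
    have hb0 : 0 ≤ b := by
      refine le_trans (le_of_eq ?_) (hb ⟨0, 0, hcomp0E, hcomp0F, by simpa using hu0, rfl⟩)
      simp
    have hg00 : 0 ≤ u - u ⊓ b := sub_nonneg.2 inf_le_left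
    rcases eq_or_lt_of_le hg00 with hzero | hgpos
    · have h1 : u - u ⊓ b = 0 := hzero.symm
      have h2 : u = u ⊓ b := by
        have := sub_eq_zero.1 h1
        exact this
      calc u = u ⊓ b := h2
      _ ≤ b := inf_le_right
    · obtain ⟨x, y, hx, hy, hxy, hxyle⟩ := hdense (u - u ⊓ b) hgpos
      have hgu : u - u ⊓ b ≤ u := sub_le_self u (le_inf hu0 hb0)
      -- choose m with nonzero truncated tensor
      have hex : ∃ m : ℕ, 1 ≤ m ∧ tmul ((m • x - e) ⊔ 0) ((m • y - f) ⊔ 0) ≠ 0 := by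
        by_contra hcon
        push_neg at hcon
        have hC : ∀ m : ℕ, m • (tmul x y) ≤ tmul x f + tmul e y := by
          intro m
          rcases Nat.eq_zero_or_pos m with rfl | hm
          · simpa using add_nonneg (hpos x f hx hf.le) (hpos e y he.le hy)
          have hx10 : (0:E) ≤ (m • x - e) ⊔ 0 := le_sup_right
          have hy10 : (0:F) ≤ (m • y - f) ⊔ 0 := le_sup_right
          have hx1m : (m • x - e) ⊔ 0 ≤ m • x :=
            sup_le (sub_le_self _ he.le) (nsmul_nonneg hx m)
          have hxm : m • x ≤ ((m • x - e) ⊔ 0) + e :=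
            sub_le_iff_le_add.1 (le_sup_left : m • x - e ≤ (m • x - e) ⊔ 0)
          have hym : m • y ≤ ((m • y - f) ⊔ 0) + f :=
            sub_le_iff_le_add.1 (le_sup_left : m • y - f ≤ (m • y - f) ⊔ 0)
          have big : m • (m • tmul x y) ≤ m • (tmul x f + tmul e y) := by
            calc m • (m • tmul x y) = tmul (m • x) (m • y) := by rw [tns1, tns2]
            _ ≤ tmul (((m • x - e) ⊔ 0) + e) (m • y) := tmono1 _ hxm (nsmul_nonneg hy m)
            _ = tmul ((m • x - e) ⊔ 0) (m • y) + tmul e (m • y) := by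
                rw [map_add, LinearMap.add_apply]
            _ ≤ (tmul ((m • x - e) ⊔ 0) ((m • y - f) ⊔ 0) + tmul ((m • x - e) ⊔ 0) f)
                  + tmul e (m • y) := by
                refine add_le_add_left ?_ _
                calc tmul ((m • x - e) ⊔ 0) (m • y)
                    ≤ tmul ((m • x - e) ⊔ 0) (((m • y - f) ⊔ 0) + f) := tmono2 _ hym hx10
                _ = _ := map_add _ _ _
            _ = tmul ((m • x - e) ⊔ 0) f + tmul e (m • y) := by rw [hcon m hm, zero_add]
            _ ≤ m • tmul x f + m • tmul e y := by
                refine add_le_add ?_ (le_of_eq ?_)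
                · have := tmono1 f hx1m hf.le
                  rwa [tns1] at this
                · exact tns2 m e y
            _ = m • (tmul x f + tmul e y) := (nsmul_add _ _ m).symm
          exact aux_nsmul_le_cancel hm big
        have := aux_arch hC
        exact absurd this hxy.not_ge
      obtain ⟨m, hm1, hvne⟩ := hex
      have hmm1 : 1 ≤ m * m := by
        have := Nat.mul_le_mul hm1 hm1
        simpa using this
      set x1 : E := (m • x - e) ⊔ 0 with hx1def
      set y1 : F := (m • y - f) ⊔ 0 with hy1def
      have hx10 : 0 ≤ x1 := le_sup_right
      have hy10 : 0 ≤ y1 := le_sup_right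
      have hx1m : x1 ≤ m • x := sup_le (sub_le_self _ he.le) (nsmul_nonneg hx m)
      have hy1m : y1 ≤ m • y := sup_le (sub_le_self _ hf.le) (nsmul_nonneg hy m)
      -- band components
      obtain ⟨p, hpc, hrpx, hpub, hplub⟩ := aux_band he.le hx10
      obtain ⟨q, hqc, hrqy, hqub, hqlub⟩ := aux_band hf.le hy10
      obtain ⟨hp0, hpe, hppc⟩ := hpc
      obtain ⟨hq0, hqe, hqqc⟩ := hqc
      have hpmx : p ≤ m • x := hplub _ (fun n => aux_trunc_le he.le hx n m)
      have hqmy : q ≤ m • y := hqlub _ (fun n => aux_trunc_le hf.le hy n m)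
      -- the tensor element v
      have hv00 : 0 ≤ tmul x1 y1 := hpos _ _ hx10 hy10
      have hmmxy : tmul (m • x) (m • y) = (m * m) • tmul x y := by
        rw [tns1, tns2, mul_nsmul]
      have hv0le : tmul x1 y1 ≤ (m * m) • tmul x y := by
        calc tmul x1 y1 ≤ tmul (m • x) y1 := tmono1 _ hx1m hy10
        _ ≤ tmul (m • x) (m • y) := tmono2 _ hy1m (nsmul_nonneg hx m)
        _ = (m * m) • tmul x y := hmmxy
      have hv0g : tmul x1 y1 ≤ (m * m) • (u - u ⊓ b) :=
        hv0le.trans (nsmul_le_nsmul_right hxyle (m * m))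
      set v := tmul x1 y1 ⊓ tmul e f with hvdef
      have hv0' : 0 ≤ v := le_inf hv00 hWpos
      have hvne' : v ≠ 0 := by
        intro h0
        refine hvne (hwuG (tmul x1 y1) ?_)
        rw [abs_of_nonneg hv00, inf_comm]
        exact h0
      -- p ⊗ q facts
      have hWu0 : 0 ≤ tmul e f - u := sub_nonneg.2 huW
      have hpq0 : 0 ≤ tmul p q := hpos _ _ hp0 hq0
      have hpqW : tmul p q ≤ tmul e f :=
        (tmono1 q hpe hq0).trans (tmono2 e hqe he.le)
      have hpqmm : tmul p q ≤ (m * m) • tmul x y := by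
        calc tmul p q ≤ tmul (m • x) q := tmono1 _ hpmx hq0
        _ ≤ tmul (m • x) (m • y) := tmono2 _ hqmy (nsmul_nonneg hx m)
        _ = (m * m) • tmul x y := hmmxy
      have hpqu : tmul p q ≤ u := by
        have hbound : tmul p q ≤ (m * m) • u :=
          hpqmm.trans (nsmul_le_nsmul_right (hxyle.trans hgu) (m * m))
        have hc : tmul p q ⊓ (tmul e f - u) = 0 := by
          refine le_antisymm ?_ (le_inf hpq0 hWu0)
          calc tmul p q ⊓ (tmul e f - u) ≤ ((m * m) • u) ⊓ (tmul e f - u) :=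
                inf_le_inf_right _ hbound
          _ = (tmul e f - u) ⊓ ((m * m) • u) := inf_comm _ _
          _ ≤ (m * m) • ((tmul e f - u) ⊓ u) := aux_inf_nsmul hWu0 hu0 (m * m) hmm1
          _ = 0 := by rw [inf_comm, hud, smul_zero]
        refine aux_le_of_disj hpq0 hu0 hWu0 ?_ hc
        rw [add_sub_cancel]
        exact hpqW
      have hpqb : tmul p q ≤ b := hb ⟨p, q, ⟨hp0, hpe, hppc⟩, ⟨hq0, hqe, hqqc⟩, hpqu, rfl⟩
      -- decomposition of tmul e f - tmul p q
      have hdec : tmul e f - tmul p q =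
          tmul (e - p) q + tmul p (f - q) + tmul (e - p) (f - q) := by
        simp only [tsub1, tsub2]
        abel
      have hd1 : 0 ≤ tmul (e - p) q := hpos _ _ (sub_nonneg.2 hpe) hq0
      have hd2 : 0 ≤ tmul p (f - q) := hpos _ _ hp0 (sub_nonneg.2 hqe)
      have hd3 : 0 ≤ tmul (e - p) (f - q) := hpos _ _ (sub_nonneg.2 hpe) (sub_nonneg.2 hqe)
      have hx1p : x1 ⊓ (e - p) = 0 := by rw [inf_comm]; exact hrpx
      have hy1q : y1 ⊓ (f - q) = 0 := by rw [inf_comm]; exact hrqy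
      -- disjointness of v from the complement pieces
      have hv1 : v ⊓ tmul (e - p) q = 0 := by
        refine le_antisymm ?_ (le_inf hv0' hd1)
        calc v ⊓ tmul (e - p) q
            ≤ tmul x1 (y1 ⊔ q) ⊓ tmul (e - p) (y1 ⊔ q) :=
              inf_le_inf (inf_le_left.trans (tmono2 _ le_sup_left hx10))
                (tmono2 _ le_sup_right (sub_nonneg.2 hpe))
        _ = tmul (x1 ⊓ (e - p)) (y1 ⊔ q) := (hinfl x1 (e - p) _ (hy10.trans le_sup_left)).symm
        _ = 0 := by rw [hx1p, map_zero, LinearMap.zero_apply]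
      have hv2 : v ⊓ tmul p (f - q) = 0 := by
        refine le_antisymm ?_ (le_inf hv0' hd2)
        calc v ⊓ tmul p (f - q)
            ≤ tmul (x1 ⊔ p) y1 ⊓ tmul (x1 ⊔ p) (f - q) :=
              inf_le_inf (inf_le_left.trans (tmono1 _ le_sup_left hy10))
                (tmono1 _ le_sup_right (sub_nonneg.2 hqe))
        _ = tmul (x1 ⊔ p) (y1 ⊓ (f - q)) := (hinfr _ y1 (f - q) (hx10.trans le_sup_left)).symm
        _ = 0 := by rw [hy1q, map_zero]
      have hv3 : v ⊓ tmul (e - p) (f - q) = 0 := by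
        refine le_antisymm ?_ (le_inf hv0' hd3)
        calc v ⊓ tmul (e - p) (f - q)
            ≤ tmul x1 (y1 ⊔ (f - q)) ⊓ tmul (e - p) (y1 ⊔ (f - q)) :=
              inf_le_inf (inf_le_left.trans (tmono2 _ le_sup_left hx10))
                (tmono2 _ le_sup_right (sub_nonneg.2 hpe))
        _ = tmul (x1 ⊓ (e - p)) (y1 ⊔ (f - q)) :=
              (hinfl x1 (e - p) _ (hy10.trans le_sup_left)).symm
        _ = 0 := by rw [hx1p, map_zero, LinearMap.zero_apply]
      have hvdisj : v ⊓ (tmul e f - tmul p q) = 0 := by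
        rw [hdec]
        exact aux_disj_add hv0' (add_nonneg hd1 hd2) hd3
          (aux_disj_add hv0' hd1 hd2 hv1 hv2) hv3
      have hvW : v ≤ tmul e f := inf_le_right
      have hvpq : v ≤ tmul p q := by
        refine aux_le_of_disj hv0' hpq0 (sub_nonneg.2 hpqW) ?_ hvdisj
        rw [add_sub_cancel]
        exact hvW
      -- tmul p q is a component of tmul e f
      have hpqW0 : tmul p q ⊓ (tmul e f - tmul p q) = 0 := by
        rw [hdec]
        refine aux_disj_add hpq0 (add_nonneg hd1 hd2) hd3
          (aux_disj_add hpq0 hd1 hd2 ?_ ?_) ?_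
        · rw [← hinfl p (e - p) q hq0, hppc, map_zero, LinearMap.zero_apply]
        · rw [← hinfr p q (f - q) hp0, hqqc, map_zero]
        · refine le_antisymm ?_ (le_inf hpq0 hd3)
          calc tmul p q ⊓ tmul (e - p) (f - q)
              ≤ tmul p (q ⊔ (f - q)) ⊓ tmul (e - p) (q ⊔ (f - q)) :=
                inf_le_inf (tmono2 _ le_sup_left hp0) (tmono2 _ le_sup_right (sub_nonneg.2 hpe))
          _ = tmul (p ⊓ (e - p)) (q ⊔ (f - q)) :=
                (hinfl p (e - p) _ (hq0.trans le_sup_left)).symm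
          _ = 0 := by rw [hppc, map_zero, LinearMap.zero_apply]
      -- final contradiction
      exfalso
      have h2 : v ≤ (m * m) • (u - tmul p q) := by
        calc v ≤ tmul x1 y1 := inf_le_left
        _ ≤ (m * m) • (u - u ⊓ b) := hv0g
        _ ≤ (m * m) • (u - tmul p q) :=
            nsmul_le_nsmul_right (sub_le_sub_left (le_inf hpqu hpqb) u) _
      have hfinal : v ≤ (m * m) • (tmul p q ⊓ (u - tmul p q)) := by
        calc v ≤ (tmul p q) ⊓ ((m * m) • (u - tmul p q)) := le_inf hvpq h2
        _ ≤ (m * m) • (tmul p q ⊓ (u - tmul p q)) :=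
            aux_inf_nsmul hpq0 (sub_nonneg.2 hpqu) (m * m) hmm1
      have hz : tmul p q ⊓ (u - tmul p q) = 0 := by
        refine le_antisymm ?_ (le_inf hpq0 (sub_nonneg.2 hpqu))
        calc tmul p q ⊓ (u - tmul p q) ≤ tmul p q ⊓ (tmul e f - tmul p q) :=
              inf_le_inf_left _ (sub_le_sub_right huW _)
        _ = 0 := hpqW0
      rw [hz, smul_zero] at hfinal
      exact hvne' (le_antisymm hfinal hv0')
end

section
/- Let E and F be Dedekind complete Riesz spaces with weak order units e and f. Let (p_n) be a sequence of components of e and (q_n) a sequence of components of f. If (p_n) is of density zero (i.e., (1/n)·∑_{k=0}^{n-1} p_k order converges to 0), then (p_n ⊗ q_n) is a density zero sequence of components of e ⊗ f in the Dedekind completion of the Fremlin tensor product E ⊗̄ F. -/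
open Finset

section Aux

variable {G : Type*} [Lattice G] [AddCommGroup G]
  [CovariantClass G G (· + ·) (· ≤ ·)]

private theorem aux_swap_cov : CovariantClass G G (Function.swap (· + ·)) (· ≤ ·) :=
  ⟨fun a b c h => by simpa [add_comm] using add_le_add_left h a⟩

private theorem aux_inf_add (x y z : G) : (x ⊓ y) + z = (x + z) ⊓ (y + z) := by
  have := aux_swap_cov (G := G)
  exact inf_add _ _ _

private theorem aux_disjoint_add {a b c : G} (ha : 0 ≤ a) (hb : 0 ≤ b) (hc : 0 ≤ c)
    (hab : a ⊓ b = 0) (hac : a ⊓ c = 0) : a ⊓ (b + c) = 0 := by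
  have h1 : a ⊓ (b + c) ≤ c := by
    calc a ⊓ (b + c) ≤ (a + c) ⊓ (b + c) :=
          inf_le_inf_right _ (le_add_of_nonneg_right hc)
      _ = (a ⊓ b) + c := (aux_inf_add a b c).symm
      _ = c := by rw [hab, zero_add]
  have h2 : a ⊓ (b + c) ≤ a ⊓ c := le_inf inf_le_left h1
  exact le_antisymm (h2.trans hac.le) (le_inf ha (add_nonneg hb hc))

private theorem aux_nsmul_nonneg {a : G} (ha : 0 ≤ a) (n : ℕ) : 0 ≤ n • a := by
  induction n with
  | zero => simp
  | succ k ih => rw [succ_nsmul]; exact add_nonneg ih ha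

private theorem aux_disjoint_nsmul {a b : G} (ha : 0 ≤ a) (hb : 0 ≤ b)
    (hab : a ⊓ b = 0) (n : ℕ) : a ⊓ n • b = 0 := by
  induction n with
  | zero => simpa using inf_eq_right.2 ha
  | succ k ih =>
      rw [succ_nsmul]
      exact aux_disjoint_add ha (aux_nsmul_nonneg hb k) hb ih hab

private theorem aux_nonneg_of_nsmul {a : G} {n : ℕ} (hn : n ≠ 0)
    (h : 0 ≤ n • a) : 0 ≤ a := by
  have hdecomp : a⁺ - a⁻ = a := posPart_sub_negPart a
  have hdisj : a⁺ ⊓ a⁻ = 0 := posPart_inf_negPart_eq_zero a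
  have hsmul : n • a = n • a⁺ - n • a⁻ := by rw [← smul_sub, hdecomp]
  have hd2 : (n • a⁺) ⊓ (n • a⁻) = 0 := by
    have h1 : (n • a⁻) ⊓ a⁺ = 0 := by
      rw [inf_comm]
      exact aux_disjoint_nsmul (posPart_nonneg _) (negPart_nonneg _) hdisj n
    rw [inf_comm]
    exact aux_disjoint_nsmul (aux_nsmul_nonneg (negPart_nonneg _) n) (posPart_nonneg _) h1 n
  have hle : n • a⁻ ≤ n • a⁺ := by
    have := h
    rw [hsmul, sub_nonneg] at this
    exact this
  have hz : n • a⁻ = 0 := by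
    have : (n • a⁻) ⊓ (n • a⁺) = n • a⁻ := inf_eq_left.2 hle
    rw [inf_comm] at hd2
    rw [hd2] at this
    exact this.symm
  have hneg : a⁻ = 0 := by
    obtain ⟨k, rfl⟩ := Nat.exists_eq_succ_of_ne_zero hn
    have h1 : a⁻ ≤ (k + 1) • a⁻ := by
      rw [succ_nsmul]
      exact le_add_of_nonneg_left (aux_nsmul_nonneg (negPart_nonneg _) k)
    exact le_antisymm (by rw [hz] at h1; exact h1) (negPart_nonneg _)
  rw [← hdecomp, hneg, sub_zero]
  exact (posPart_nonneg _)

private theorem aux_sum_nonneg {f : ℕ → G} (hf : ∀ k, 0 ≤ f k) (n : ℕ) :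
    0 ≤ ∑ k ∈ Finset.range n, f k := by
  induction n with
  | zero => simp
  | succ k ih => rw [Finset.sum_range_succ]; exact add_nonneg ih (hf k)

private theorem aux_inv_nat_smul_nonneg [Module ℝ G] {a : G} (ha : 0 ≤ a) (n : ℕ) :
    0 ≤ (n : ℝ)⁻¹ • a := by
  rcases Nat.eq_zero_or_pos n with rfl | hn
  · simp
  · apply aux_nonneg_of_nsmul (a := (n : ℝ)⁻¹ • a) hn.ne'
    have : (n : ℕ) • ((n : ℝ)⁻¹ • a) = a := by
      rw [← Nat.cast_smul_eq_nsmul ℝ, smul_smul,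
        mul_inv_cancel₀ (by exact_mod_cast hn.ne' : (n : ℝ) ≠ 0), one_smul]
    rw [this]
    exact ha

end Aux

/-- if `(p_n)` is a density zero sequence of components of `e` and `(q_n)`
a sequence of components of `f`, then `(p_n ⊗ q_n)` is a density zero sequence of
components of `e ⊗ f` in the Dedekind completion of the Fremlin tensor product. -/
theorem tmul_densityZero
    {E F G : Type*}
    [ConditionallyCompleteLattice E] [AddCommGroup E] [Module ℝ E]
    [CovariantClass E E (· + ·) (· ≤ ·)]
    [ConditionallyCompleteLattice F] [AddCommGroup F] [Module ℝ F]
    [CovariantClass F F (· + ·) (· ≤ ·)]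
    [ConditionallyCompleteLattice G] [AddCommGroup G] [Module ℝ G]
    [CovariantClass G G (· + ·) (· ≤ ·)]
    (e : E) (he : 0 < e) (hwuE : ∀ x : E, e ⊓ |x| = 0 → x = 0)
    (f : F) (hf : 0 < f) (hwuF : ∀ y : F, f ⊓ |y| = 0 → y = 0)
    (tmul : E →ₗ[ℝ] F →ₗ[ℝ] G)
    (hpos : ∀ x y, 0 ≤ x → 0 ≤ y → 0 ≤ tmul x y)
    (hinfl : ∀ (x x' : E) (y : F), 0 ≤ y → tmul (x ⊓ x') y = tmul x y ⊓ tmul x' y)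
    (hinfr : ∀ (x : E) (y y' : F), 0 ≤ x → tmul x (y ⊓ y') = tmul x y ⊓ tmul x y')
    -- order continuity of the bilinear tensor map
    (hoc : ∀ (x : ℕ → E) (a : E) (y : F), 0 ≤ y →
      OrderConvergesTo x a → OrderConvergesTo (fun n => tmul (x n) y) (tmul a y))
    (p : ℕ → E) (q : ℕ → F)
    (hp : ∀ n, IsComponent e (p n)) (hq : ∀ n, IsComponent f (q n))
    (hdz : DensityZero p) :
    (∀ n, IsComponent (tmul e f) (tmul (p n) (q n))) ∧
      DensityZero (fun n => tmul (p n) (q n)) := by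
  have hcomp : ∀ n, IsComponent (tmul e f) (tmul (p n) (q n)) := by
    intro n
    obtain ⟨hp0, hpe, hpd⟩ := hp n
    obtain ⟨hq0, hqf, hqd⟩ := hq n
    have hb : (0 : G) ≤ tmul (e - p n) (q n) := hpos _ _ (sub_nonneg.2 hpe) hq0
    have hc : (0 : G) ≤ tmul e (f - q n) := hpos _ _ he.le (sub_nonneg.2 hqf)
    have hsum : tmul e f - tmul (p n) (q n) =
        tmul (e - p n) (q n) + tmul e (f - q n) := by
      simp only [map_sub, LinearMap.sub_apply]
      abel
    have hab : tmul (p n) (q n) ⊓ tmul (e - p n) (q n) = 0 := by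
      rw [← hinfl (p n) (e - p n) (q n) hq0, hpd]
      simp
    have hac : tmul (p n) (q n) ⊓ tmul e (f - q n) = 0 := by
      have h1 : tmul (p n) (q n) ≤ tmul e (q n) := by
        have := hb
        rw [map_sub, LinearMap.sub_apply, sub_nonneg] at this
        exact this
      have h2 : tmul e (q n) ⊓ tmul e (f - q n) = 0 := by
        rw [← hinfr e (q n) (f - q n) he.le, hqd]
        simp
      exact le_antisymm ((inf_le_inf_right _ h1).trans h2.le)
        (le_inf (hpos _ _ hp0 hq0) hc)
    refine ⟨hpos _ _ hp0 hq0, ?_, ?_⟩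
    · rw [← sub_nonneg, hsum]
      exact add_nonneg hb hc
    · rw [hsum]
      exact aux_disjoint_add (hpos _ _ hp0 hq0) hb hc hab hac
  refine ⟨hcomp, ?_⟩
  obtain ⟨u, hu_anti, hu_glb, hu⟩ :=
    hoc (fun n => (n : ℝ)⁻¹ • ∑ k ∈ Finset.range n, p k) 0 f hf.le hdz
  refine ⟨u, hu_anti, hu_glb, fun m => ?_⟩
  obtain ⟨N, hN⟩ := hu m
  refine ⟨N, fun n hn => ?_⟩
  have h1 := hN n hn
  simp only [map_zero, LinearMap.zero_apply, sub_zero] at h1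
  set g : G := (n : ℝ)⁻¹ • ∑ k ∈ Finset.range n, tmul (p k) (q k) with hg_def
  set h : G := tmul ((n : ℝ)⁻¹ • ∑ k ∈ Finset.range n, p k) f with hh_def
  have hg0 : 0 ≤ g := by
    have hs : (0 : G) ≤ ∑ k ∈ Finset.range n, tmul (p k) (q k) :=
      aux_sum_nonneg (fun k => hpos _ _ (hp k).1 (hq k).1) n
    exact aux_inv_nat_smul_nonneg hs n
  have hgh : g ≤ h := by
    rw [← sub_nonneg]
    have hh_eq : h - g = (n : ℝ)⁻¹ • ∑ k ∈ Finset.range n, tmul (p k) (f - q k) := by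
      rw [hh_def, hg_def, map_smul, LinearMap.smul_apply, ← smul_sub]
      congr 1
      rw [map_sum, LinearMap.sum_apply, ← Finset.sum_sub_distrib]
      refine Finset.sum_congr rfl fun k _ => ?_
      rw [map_sub]
    rw [hh_eq]
    have hs : (0 : G) ≤ ∑ k ∈ Finset.range n, tmul (p k) (f - q k) :=
      aux_sum_nonneg (fun k => hpos _ _ (hp k).1 (sub_nonneg.2 (hq k).2.1)) n
    exact aux_inv_nat_smul_nonneg hs n
  calc |(n : ℝ)⁻¹ • ∑ k ∈ Finset.range n, tmul (p k) (q k) - 0| = g := by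
        rw [sub_zero, ← hg_def, abs_of_nonneg hg0]
    _ ≤ h := hgh
    _ ≤ |h| := le_abs_self _
    _ ≤ u m := h1
end
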